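/- Suppose the matrix free polynomials F ∈ M_k(ℂ⟨x⟩) and G ∈ M_ℓ(ℂ⟨x⟩) are stably associated. Let P_n and Q_n denote their respective nth-degree optimal polynomial approximants, i.e. P_n minimizes ‖PF − I‖₂ over matrix polynomials P of degree ≤ n, and similarly for Q_n. Then there exist constants C₁, C₂ ∈ ℝ and D₁, D₂ ∈ ℕ such that for all sufficiently large n: C₁‖P_{n+D₁}F − I‖₂² ≤ ‖Q_nG − I‖₂² ≤ C₂‖P_{n−D₂}F − I‖₂². -/

import Mathlib

set_option maxHeartbeats 1000000


open scoped BigOperators Kronecker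
open Matrix

noncomputable section

/-- Words in the letters `1,…,d`. -/
abbrev Word (d : ℕ) := FreeMonoid (Fin d)

/-- The free algebra `ℂ⟨x₁,…,x_d⟩`, realized as the monoid algebra of the free monoid. -/
abbrev FreePoly (d : ℕ) := MonoidAlgebra ℂ (Word d)

/-- Squared ℓ² norm of the coefficients of a free polynomial. -/
def FreePoly.normSq {d : ℕ} (p : FreePoly d) : ℝ := p.coeff.sum fun _ c => ‖c‖ ^ 2

/-- ℓ² norm of the coefficients of a free polynomial. -/
def FreePoly.norm2 {d : ℕ} (p : FreePoly d) : ℝ := Real.sqrt p.normSq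

/-- `p` has degree at most `n`. -/
def FreePoly.degLE {d : ℕ} (p : FreePoly d) (n : ℕ) : Prop :=
  ∀ w ∈ p.coeff.support, w.toList.length ≤ n

/-- Evaluation of a word at a `d`-tuple of `k × k` matrices: `X^w`. -/
def wordEval {d k : ℕ} (X : Fin d → Matrix (Fin k) (Fin k) ℂ) (w : Word d) :
    Matrix (Fin k) (Fin k) ℂ :=
  (w.toList.map X).prod

/-- Evaluation of a free polynomial at a matrix tuple. -/
def FreePoly.eval {d k : ℕ} (p : FreePoly d) (X : Fin d → Matrix (Fin k) (Fin k) ℂ) :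
    Matrix (Fin k) (Fin k) ℂ :=
  p.coeff.sum fun w c => c • wordEval X w

/-- `k×k`-matrix-valued free polynomials `M_k(ℂ⟨x⟩)`. -/
abbrev MatPoly (d k : ℕ) := Matrix (Fin k) (Fin k) (FreePoly d)

/-- Squared ℓ² (Frobenius) norm of the coefficients of a matrix free polynomial. -/
def MatPoly.normSq {d k : ℕ} (F : MatPoly d k) : ℝ := ∑ i, ∑ j, (F i j).normSq

def MatPoly.norm2 {d k : ℕ} (F : MatPoly d k) : ℝ := Real.sqrt F.normSq

def MatPoly.degLE {d k : ℕ} (F : MatPoly d k) (n : ℕ) : Prop := ∀ i j, (F i j).degLE n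

/-- Evaluation of a matrix free polynomial at an `m×m` matrix tuple,
`F(X) = Σ_w A_w ⊗ X^w ∈ M_k(ℂ) ⊗ M_m(ℂ)`. -/
def MatPoly.eval {d k m : ℕ} (F : MatPoly d k) (X : Fin d → Matrix (Fin m) (Fin m) ℂ) :
    Matrix (Fin k × Fin m) (Fin k × Fin m) ℂ :=
  Matrix.of fun p q => ((F p.1 q.1).eval X) p.2 q.2

/-- The homogeneous linear pencil `Ax = A₁x₁ + ⋯ + A_d x_d` as a matrix free polynomial. -/
def pencil {d m : ℕ} (A : Fin d → Matrix (Fin m) (Fin m) ℂ) : MatPoly d m :=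
  Matrix.of fun i j => ∑ l, MonoidAlgebra.single (FreeMonoid.of l) (A l i j)

/-- Operator norm of a matrix, acting on Euclidean space. -/
def opNorm {ι : Type} [Fintype ι] [DecidableEq ι] (M : Matrix ι ι ℂ) : ℝ :=
  ‖Matrix.toEuclideanCLM (𝕜 := ℂ) M‖

/-- `X` is a strict row contraction: `‖X₁X₁* + ⋯ + X_dX_d*‖ < 1`. -/
def IsStrictRowContraction {d k : ℕ} (X : Fin d → Matrix (Fin k) (Fin k) ℂ) : Prop :=
  opNorm (∑ j, X j * (X j)ᴴ) < 1

/-- The column norm `‖A‖_col = ‖Σ Aⱼ*Aⱼ‖^{1/2}`. -/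
def colNorm {d m : ℕ} (A : Fin d → Matrix (Fin m) (Fin m) ℂ) : ℝ :=
  Real.sqrt (opNorm (∑ j, (A j)ᴴ * A j))

/-- The completely positive map `Ψ_X : T ↦ Σ Xⱼ T Xⱼ*`. -/
def Psi {d n : ℕ} (X : Fin d → Matrix (Fin n) (Fin n) ℂ) :
    Module.End ℂ (Matrix (Fin n) (Fin n) ℂ) where
  toFun T := ∑ j, X j * T * (X j)ᴴ
  map_add' T S := by
    simp [Matrix.mul_add, Matrix.add_mul, Finset.sum_add_distrib]
  map_smul' c T := by
    simp [Matrix.mul_smul, Matrix.smul_mul, Finset.smul_sum]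

/-- The outer spectral radius `ρ(X)`: the square root of the spectral radius of `Ψ_X`. -/
def outerRadius {d n : ℕ} (X : Fin d → Matrix (Fin n) (Fin n) ℂ) : ℝ :=
  Real.sqrt (sSup ((fun μ : ℂ => ‖μ‖) '' spectrum ℂ (Psi X)))

/-- The `N × N` dilation `diag(A, I)` of a `k × k` matrix polynomial. -/
def dilate {d k : ℕ} (A : MatPoly d k) (N : ℕ) : MatPoly d N :=
  Matrix.of fun i j =>
    if hi : (i : ℕ) < k then
      (if hj : (j : ℕ) < k then A ⟨i, hi⟩ ⟨j, hj⟩ else 0)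
    else if (i : ℕ) = (j : ℕ) then 1 else 0

/-- `A` and `B` (square matrix polynomials of possibly different sizes) are stably
associated: `P · diag(A, I) · Q = diag(B, I)` for some invertible `P, Q ∈ GL_N(ℂ⟨x⟩)`. -/
def StablyAssociated {d k l : ℕ} (A : MatPoly d k) (B : MatPoly d l) : Prop :=
  ∃ N : ℕ, k ≤ N ∧ l ≤ N ∧ ∃ P Q : MatPoly d N, IsUnit P ∧ IsUnit Q ∧
    P * dilate A N * Q = dilate B N

/-- A tuple of matrices is irreducible if it generates the full matrix algebra. -/
def IrreducibleTuple {d : ℕ} {ι : Type} [Fintype ι] [DecidableEq ι]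
    (A : Fin d → Matrix ι ι ℂ) : Prop :=
  Algebra.adjoin ℂ (Set.range A) = ⊤

/-- A regular, non-invertible matrix polynomial is an atom if it is not a product of two
non-invertible matrix polynomials. -/
def IsAtomMP {d k : ℕ} (F : MatPoly d k) : Prop :=
  IsRegular F ∧ ¬IsUnit F ∧ ∀ G H : MatPoly d k, F = G * H → IsUnit G ∨ IsUnit H

/-- `π_n(Mx) = Σ_{k=0}^n (1 − (k+1)/(n+2)) (Mx)^k`. -/
def piMx {d m : ℕ} (n : ℕ) (M : Fin d → Matrix (Fin m) (Fin m) ℂ) : MatPoly d m :=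
  ∑ k ∈ Finset.range (n + 1), (1 - ((k : ℂ) + 1) / ((n : ℂ) + 2)) • pencil M ^ k

/-! ### Auxiliary lemmas -/

section Aux

open Finset MonoidAlgebra

variable {d : ℕ}

lemma FreePoly.normSq_def (p : FreePoly d) : p.normSq = ∑ w ∈ p.coeff.support, ‖p.coeff w‖ ^ 2 := rfl

lemma FreePoly.normSq_nonneg (p : FreePoly d) : 0 ≤ p.normSq := by
  rw [FreePoly.normSq_def]
  exact Finset.sum_nonneg fun _ _ => by positivity

lemma FreePoly.normSq_eq_sum (p : FreePoly d) {S : Finset (Word d)} (hS : p.coeff.support ⊆ S) :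
    p.normSq = ∑ w ∈ S, ‖p.coeff w‖ ^ 2 :=
  Finsupp.sum_of_support_subset p.coeff hS _ (fun w _ => by simp)

lemma FreePoly.normSq_sum_le {ι : Type*} (s : Finset ι) (f : ι → FreePoly d) :
    FreePoly.normSq (∑ i ∈ s, f i) ≤ (s.card : ℝ) * ∑ i ∈ s, FreePoly.normSq (f i) := by
  classical
  set S := s.biUnion fun i => (f i).coeff.support with hSdef
  have hsub : (∑ i ∈ s, f i).coeff.support ⊆ S := by
    intro w hw
    rw [MonoidAlgebra.coeff_sum] at hw
    obtain ⟨c, hc, hwc⟩ := Finsupp.mem_support_finset_sum w hw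
    exact Finset.mem_biUnion.mpr ⟨c, hc, hwc⟩
  rw [FreePoly.normSq_eq_sum _ hsub]
  have hpoint : ∀ w, ‖(∑ i ∈ s, f i).coeff w‖ ^ 2 ≤ (s.card : ℝ) * ∑ i ∈ s, ‖(f i).coeff w‖ ^ 2 := by
    intro w
    have h1 : ‖(∑ i ∈ s, f i).coeff w‖ ≤ ∑ i ∈ s, ‖(f i).coeff w‖ := by
      rw [MonoidAlgebra.coeff_sum, Finset.sum_apply']
      exact norm_sum_le _ _
    have h2 : ‖(∑ i ∈ s, f i).coeff w‖ ^ 2 ≤ (∑ i ∈ s, ‖(f i).coeff w‖) ^ 2 := by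
      apply pow_le_pow_left₀ (norm_nonneg _) h1
    exact h2.trans (sq_sum_le_card_mul_sum_sq)
  calc ∑ w ∈ S, ‖(∑ i ∈ s, f i).coeff w‖ ^ 2
      ≤ ∑ w ∈ S, (s.card : ℝ) * ∑ i ∈ s, ‖(f i).coeff w‖ ^ 2 :=
        Finset.sum_le_sum fun w _ => hpoint w
    _ = (s.card : ℝ) * ∑ i ∈ s, ∑ w ∈ S, ‖(f i).coeff w‖ ^ 2 := by
        rw [← Finset.mul_sum, Finset.sum_comm]
    _ = (s.card : ℝ) * ∑ i ∈ s, FreePoly.normSq (f i) := by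
        congr 1
        refine Finset.sum_congr rfl fun i hi => ?_
        exact (FreePoly.normSq_eq_sum _ (Finset.subset_biUnion_of_mem (fun i => (f i).coeff.support) hi)).symm

lemma FreePoly.normSq_single_mul (u : Word d) (c : ℂ) (q : FreePoly d) :
    FreePoly.normSq (MonoidAlgebra.single u c * q) = ‖c‖ ^ 2 * q.normSq := by
  classical
  have hsub : (MonoidAlgebra.single u c * q).coeff.support ⊆ q.coeff.support.image (u * ·) :=
    MonoidAlgebra.support_coeff_single_mul_subset q c u
  have hinj : ∀ a ∈ q.coeff.support, ∀ b ∈ q.coeff.support, u * a = u * b → a = b :=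
    fun a _ b _ h => mul_left_cancel h
  rw [FreePoly.normSq_eq_sum _ hsub, Finset.sum_image hinj]
  rw [FreePoly.normSq_def, Finset.mul_sum]
  refine Finset.sum_congr rfl fun v _ => ?_
  have hval : (MonoidAlgebra.single u c * q).coeff (u * v) = c * q.coeff v :=
    MonoidAlgebra.coeff_single_mul_eq_mul_coeff v fun a _ =>
      ⟨fun h => mul_left_cancel h, fun h => by rw [h]⟩
  rw [hval, norm_mul, mul_pow]

lemma FreePoly.normSq_mul_single (u : Word d) (c : ℂ) (q : FreePoly d) :
    FreePoly.normSq (q * MonoidAlgebra.single u c) = ‖c‖ ^ 2 * q.normSq := by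
  classical
  have hsub : (q * MonoidAlgebra.single u c).coeff.support ⊆ q.coeff.support.image (· * u) :=
    MonoidAlgebra.support_coeff_mul_single_subset q c u
  have hinj : ∀ a ∈ q.coeff.support, ∀ b ∈ q.coeff.support, a * u = b * u → a = b :=
    fun a _ b _ h => mul_right_cancel h
  rw [FreePoly.normSq_eq_sum _ hsub, Finset.sum_image hinj]
  rw [FreePoly.normSq_def, Finset.mul_sum]
  refine Finset.sum_congr rfl fun v _ => ?_
  have hval : (q * MonoidAlgebra.single u c).coeff (v * u) = q.coeff v * c :=
    MonoidAlgebra.coeff_mul_single_eq_coeff_mul v fun a _ =>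
      ⟨fun h => mul_right_cancel h, fun h => by rw [h]⟩
  rw [hval, norm_mul, mul_pow]
  ring

lemma FreePoly.normSq_mul_le_left (p q : FreePoly d) :
    FreePoly.normSq (p * q) ≤ ((p.coeff.support.card : ℝ) * p.normSq) * q.normSq := by
  classical
  have hrep : p * q = ∑ u ∈ p.coeff.support, MonoidAlgebra.single u (p.coeff u) * q := by
    rw [← Finset.sum_mul]
    congr 1
    conv_lhs => rw [← MonoidAlgebra.sum_coeff_single p]
    rfl
  calc FreePoly.normSq (p * q)
      ≤ (p.coeff.support.card : ℝ) * ∑ u ∈ p.coeff.support,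
          FreePoly.normSq (MonoidAlgebra.single u (p.coeff u) * q) := by
        rw [hrep]; exact FreePoly.normSq_sum_le _ _
    _ = ((p.coeff.support.card : ℝ) * p.normSq) * q.normSq := by
        simp only [FreePoly.normSq_single_mul]
        rw [← Finset.sum_mul, ← FreePoly.normSq_def]
        ring

lemma FreePoly.normSq_mul_le_right (p q : FreePoly d) :
    FreePoly.normSq (p * q) ≤ ((q.coeff.support.card : ℝ) * q.normSq) * p.normSq := by
  classical
  have hrep : p * q = ∑ u ∈ q.coeff.support, p * MonoidAlgebra.single u (q.coeff u) := by
    rw [← Finset.mul_sum]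
    congr 1
    conv_lhs => rw [← MonoidAlgebra.sum_coeff_single q]
    rfl
  calc FreePoly.normSq (p * q)
      ≤ (q.coeff.support.card : ℝ) * ∑ u ∈ q.coeff.support,
          FreePoly.normSq (p * MonoidAlgebra.single u (q.coeff u)) := by
        rw [hrep]; exact FreePoly.normSq_sum_le _ _
    _ = ((q.coeff.support.card : ℝ) * q.normSq) * p.normSq := by
        simp only [FreePoly.normSq_mul_single]
        rw [← Finset.sum_mul, ← FreePoly.normSq_def]
        ring

lemma FreePoly.degLE_sum {ι : Type*} {s : Finset ι} {f : ι → FreePoly d} {n : ℕ}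
    (h : ∀ i ∈ s, (f i).degLE n) : (∑ i ∈ s, f i).degLE n := by
  intro w hw
  rw [MonoidAlgebra.coeff_sum] at hw
  obtain ⟨c, hc, hwc⟩ := Finsupp.mem_support_finset_sum w hw
  exact h c hc w hwc

lemma FreePoly.degLE_mul {p q : FreePoly d} {a b : ℕ}
    (hp : p.degLE a) (hq : q.degLE b) : (p * q).degLE (a + b) := by
  classical
  intro w hw
  have := MonoidAlgebra.support_coeff_mul_subset p q hw
  obtain ⟨u, hu, v, hv, rfl⟩ := Finset.mem_mul.mp this
  have : (u * v).toList.length = u.toList.length + v.toList.length := by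
    simp [FreeMonoid.toList_mul]
  rw [this]
  exact add_le_add (hp u hu) (hq v hv)

lemma FreePoly.degLE_zero (n : ℕ) : (0 : FreePoly d).degLE n := by
  intro w hw
  simp at hw

lemma FreePoly.degLE_one (n : ℕ) : (1 : FreePoly d).degLE n := by
  intro w hw
  have : w ∈ ({(1 : Word d)} : Finset (Word d)) :=
    Finsupp.support_single_subset hw
  simp only [Finset.mem_singleton] at this
  subst this
  simp [FreeMonoid.toList_one]

lemma FreePoly.degLE_mono {p : FreePoly d} {a b : ℕ} (h : p.degLE a) (hab : a ≤ b) :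
    p.degLE b := fun w hw => (h w hw).trans hab

lemma FreePoly.exists_degLE (p : FreePoly d) : ∃ n, p.degLE n :=
  ⟨p.coeff.support.sup fun w => w.toList.length, fun _ hw => Finset.le_sup hw⟩

lemma MatPoly.normSq_nonneg {k : ℕ} (F : MatPoly d k) : 0 ≤ F.normSq :=
  Finset.sum_nonneg fun _ _ => Finset.sum_nonneg fun _ _ => FreePoly.normSq_nonneg _

lemma MatPoly.entry_normSq_le {k : ℕ} (A : MatPoly d k) (i j : Fin k) :
    FreePoly.normSq (A i j) ≤ A.normSq := by
  have h1 : FreePoly.normSq (A i j) ≤ ∑ j', (A i j').normSq :=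
    Finset.single_le_sum (fun _ _ => FreePoly.normSq_nonneg _) (Finset.mem_univ j)
  exact h1.trans (Finset.single_le_sum (f := fun i' => ∑ j', (A i' j').normSq)
    (fun _ _ => Finset.sum_nonneg fun _ _ => FreePoly.normSq_nonneg _) (Finset.mem_univ i))

/-- Constant controlling left multiplication by `U` in the `‖·‖₂²` norm. -/
def MatPoly.leftC {d k : ℕ} (U : MatPoly d k) : ℝ :=
  (k : ℝ) ^ 2 * ∑ i, ∑ s, ((U i s).coeff.support.card * (U i s).normSq)

lemma MatPoly.leftC_nonneg {k : ℕ} (U : MatPoly d k) : 0 ≤ U.leftC := by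
  apply mul_nonneg (by positivity)
  exact Finset.sum_nonneg fun _ _ => Finset.sum_nonneg fun _ _ =>
    mul_nonneg (by positivity) (FreePoly.normSq_nonneg _)

lemma MatPoly.normSq_mul_le_left {k : ℕ} (U A : MatPoly d k) :
    MatPoly.normSq (U * A) ≤ U.leftC * A.normSq := by
  classical
  have key : ∀ i j : Fin k, FreePoly.normSq ((U * A) i j) ≤
      (k : ℝ) * ((∑ s, ((U i s).coeff.support.card * (U i s).normSq)) * A.normSq) := by
    intro i j
    rw [Matrix.mul_apply]
    refine (FreePoly.normSq_sum_le Finset.univ _).trans ?_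
    rw [Finset.card_univ, Fintype.card_fin, Finset.sum_mul]
    refine mul_le_mul_of_nonneg_left (Finset.sum_le_sum fun s _ => ?_) (by positivity)
    calc (U i s * A s j).normSq
        ≤ ((U i s).coeff.support.card * (U i s).normSq) * (A s j).normSq :=
          FreePoly.normSq_mul_le_left _ _
      _ ≤ ((U i s).coeff.support.card * (U i s).normSq) * A.normSq := by
          refine mul_le_mul_of_nonneg_left (MatPoly.entry_normSq_le A s j) ?_
          exact mul_nonneg (by positivity) (FreePoly.normSq_nonneg _)
  calc MatPoly.normSq (U * A) = ∑ i, ∑ j, FreePoly.normSq ((U * A) i j) := rfl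
    _ ≤ ∑ i : Fin k, ∑ _j : Fin k,
        (k : ℝ) * ((∑ s, ((U i s).coeff.support.card * (U i s).normSq)) * A.normSq) :=
        Finset.sum_le_sum fun i _ => Finset.sum_le_sum fun j _ => key i j
    _ = U.leftC * A.normSq := by
        rw [MatPoly.leftC]
        simp only [Finset.sum_const, Finset.card_univ, Fintype.card_fin, nsmul_eq_mul,
          ← Finset.mul_sum, ← Finset.sum_mul]
        ring

/-- Constant controlling right multiplication by `V` in the `‖·‖₂²` norm. -/
def MatPoly.rightC {d k : ℕ} (V : MatPoly d k) : ℝ :=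
  (k : ℝ) ^ 2 * ∑ s, ∑ j, ((V s j).coeff.support.card * (V s j).normSq)

lemma MatPoly.rightC_nonneg {k : ℕ} (V : MatPoly d k) : 0 ≤ V.rightC := by
  apply mul_nonneg (by positivity)
  exact Finset.sum_nonneg fun _ _ => Finset.sum_nonneg fun _ _ =>
    mul_nonneg (by positivity) (FreePoly.normSq_nonneg _)

lemma MatPoly.normSq_mul_le_right {k : ℕ} (A V : MatPoly d k) :
    MatPoly.normSq (A * V) ≤ V.rightC * A.normSq := by
  classical
  have key : ∀ i j : Fin k, FreePoly.normSq ((A * V) i j) ≤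
      (k : ℝ) * ((∑ s, ((V s j).coeff.support.card * (V s j).normSq)) * A.normSq) := by
    intro i j
    rw [Matrix.mul_apply]
    refine (FreePoly.normSq_sum_le Finset.univ _).trans ?_
    rw [Finset.card_univ, Fintype.card_fin, Finset.sum_mul]
    refine mul_le_mul_of_nonneg_left (Finset.sum_le_sum fun s _ => ?_) (by positivity)
    calc (A i s * V s j).normSq
        ≤ ((V s j).coeff.support.card * (V s j).normSq) * (A i s).normSq :=
          FreePoly.normSq_mul_le_right _ _
      _ ≤ ((V s j).coeff.support.card * (V s j).normSq) * A.normSq := by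
          refine mul_le_mul_of_nonneg_left (MatPoly.entry_normSq_le A i s) ?_
          exact mul_nonneg (by positivity) (FreePoly.normSq_nonneg _)
  calc MatPoly.normSq (A * V) = ∑ i, ∑ j, FreePoly.normSq ((A * V) i j) := rfl
    _ ≤ ∑ _i : Fin k, ∑ j : Fin k,
        (k : ℝ) * ((∑ s, ((V s j).coeff.support.card * (V s j).normSq)) * A.normSq) :=
        Finset.sum_le_sum fun i _ => Finset.sum_le_sum fun j _ => key i j
    _ = V.rightC * A.normSq := by
        rw [MatPoly.rightC]
        simp only [Finset.sum_const, Finset.card_univ, Fintype.card_fin, nsmul_eq_mul,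
          ← Finset.mul_sum, ← Finset.sum_mul]
        rw [Finset.sum_comm]
        ring

lemma MatPoly.degLE_mul {k : ℕ} {U A : MatPoly d k} {a b : ℕ}
    (hU : U.degLE a) (hA : A.degLE b) : MatPoly.degLE (U * A) (a + b) := by
  intro i j
  rw [Matrix.mul_apply]
  exact FreePoly.degLE_sum fun s _ => FreePoly.degLE_mul (hU i s) (hA s j)

lemma MatPoly.degLE_mono {k : ℕ} {A : MatPoly d k} {a b : ℕ}
    (h : A.degLE a) (hab : a ≤ b) : A.degLE b :=
  fun i j => FreePoly.degLE_mono (h i j) hab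

lemma MatPoly.exists_degLE {k : ℕ} (A : MatPoly d k) : ∃ n, A.degLE n := by
  classical
  refine ⟨Finset.univ.sup (fun ij : Fin k × Fin k =>
    (A ij.1 ij.2).coeff.support.sup fun w => w.toList.length), fun i j w hw => ?_⟩
  calc w.toList.length ≤ (A i j).coeff.support.sup (fun w => w.toList.length) := Finset.le_sup hw
    _ ≤ _ := Finset.le_sup (f := fun ij : Fin k × Fin k =>
        (A ij.1 ij.2).coeff.support.sup fun w => w.toList.length) (Finset.mem_univ (i, j))

private lemma sum_castLE_eq {M : Type*} [AddCommMonoid M] {k N : ℕ} (hk : k ≤ N)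
    (f : Fin N → M) (h0 : ∀ s : Fin N, k ≤ (s : ℕ) → f s = 0) :
    ∑ s : Fin N, f s = ∑ t : Fin k, f (Fin.castLE hk t) := by
  classical
  rw [← Finset.sum_image (f := f) (g := Fin.castLE hk)
    (fun a _ b _ h => Fin.castLE_injective hk h)]
  refine (Finset.sum_subset (Finset.subset_univ _) fun x _ hx => h0 x ?_).symm
  by_contra hlt
  push_neg at hlt
  exact hx (Finset.mem_image.mpr ⟨⟨(x : ℕ), hlt⟩, Finset.mem_univ _, by ext; simp⟩)

private lemma sum_castLE_le {k N : ℕ} (hk : k ≤ N) (f : Fin N → ℝ)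
    (h0 : ∀ s, 0 ≤ f s) :
    ∑ t : Fin k, f (Fin.castLE hk t) ≤ ∑ s : Fin N, f s := by
  classical
  rw [← Finset.sum_image (f := f) (g := Fin.castLE hk)
    (fun a _ b _ h => Fin.castLE_injective hk h)]
  exact Finset.sum_le_sum_of_subset_of_nonneg (Finset.subset_univ _) fun x _ _ => h0 x

/-- `diag(E, 0)`: pad a `k×k` matrix polynomial by zeros to size `N`. -/
def MatPoly.pad {d k : ℕ} (E : MatPoly d k) (N : ℕ) : MatPoly d N :=
  Matrix.of fun i j =>
    if hi : (i : ℕ) < k then (if hj : (j : ℕ) < k then E ⟨i, hi⟩ ⟨j, hj⟩ else 0) else 0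

lemma dilate_eq_pad_add_one {k N : ℕ} (hk : k ≤ N) (A : MatPoly d k) :
    dilate A N = MatPoly.pad (A - 1) N + 1 := by
  ext i j
  simp only [dilate, MatPoly.pad, Matrix.of_apply, Matrix.add_apply, Matrix.sub_apply,
    Matrix.one_apply]
  by_cases hi : (i : ℕ) < k
  · by_cases hj : (j : ℕ) < k
    · rw [dif_pos hi, dif_pos hj, dif_pos hi, dif_pos hj]
      have hieq : (⟨(i : ℕ), hi⟩ : Fin k) = ⟨(j : ℕ), hj⟩ ↔ i = j := by
        constructor
        · intro h
          exact Fin.ext (by simpa using Fin.ext_iff.mp h)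
        · intro h
          subst h
          rfl
      by_cases hij : i = j
      · rw [if_pos hij, if_pos (hieq.mpr hij)]
        simp
      · rw [if_neg hij, if_neg (fun h => hij (hieq.mp h))]
        simp
    · rw [dif_pos hi, dif_neg hj, dif_pos hi, dif_neg hj]
      have : i ≠ j := by
        intro h
        subst h
        exact hj hi
      rw [if_neg this, zero_add]
  · rw [dif_neg hi, dif_neg hi]
    have hvij : (i : ℕ) = (j : ℕ) ↔ i = j := Fin.val_inj
    by_cases hij : i = j
    · rw [if_pos (hvij.mpr hij), if_pos hij, zero_add]
    · rw [if_neg (fun h => hij (hvij.mp h)), if_neg hij, zero_add]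

lemma dilate_mul {k N : ℕ} (hk : k ≤ N) (A B : MatPoly d k) :
    dilate A N * dilate B N = dilate (A * B) N := by
  classical
  ext i j
  rw [Matrix.mul_apply]
  by_cases hi : (i : ℕ) < k
  · by_cases hj : (j : ℕ) < k
    · have hterm : ∀ s : Fin N, k ≤ (s : ℕ) →
          dilate A N i s * dilate B N s j = 0 := by
        intro s hs
        have h1 : dilate A N i s = 0 := by
          simp only [dilate, Matrix.of_apply]
          rw [dif_pos hi, dif_neg (not_lt.mpr hs)]
        rw [h1, zero_mul]
      rw [sum_castLE_eq hk _ hterm]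
      have : ∀ t : Fin k,
          dilate A N i (Fin.castLE hk t) * dilate B N (Fin.castLE hk t) j =
            A ⟨(i : ℕ), hi⟩ t * B t ⟨(j : ℕ), hj⟩ := by
        intro t
        have ht : ((Fin.castLE hk t : Fin N) : ℕ) < k := t.isLt
        simp only [dilate, Matrix.of_apply]
        rw [dif_pos hi, dif_pos ht, dif_pos ht, dif_pos hj]
        have h2 : (⟨((Fin.castLE hk t : Fin N) : ℕ), ht⟩ : Fin k) = t := Fin.ext rfl
        rw [h2]
      rw [Finset.sum_congr rfl fun t _ => this t]
      simp only [dilate, Matrix.of_apply]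
      rw [dif_pos hi, dif_pos hj, Matrix.mul_apply]
    · have : ∀ s : Fin N, s ∈ Finset.univ →
          dilate A N i s * dilate B N s j = 0 := by
        intro s _
        by_cases hs : (s : ℕ) < k
        · have h1 : dilate B N s j = 0 := by
            simp only [dilate, Matrix.of_apply]
            rw [dif_pos hs, dif_neg hj]
          rw [h1, mul_zero]
        · have h1 : dilate A N i s = 0 := by
            simp only [dilate, Matrix.of_apply]
            rw [dif_pos hi, dif_neg hs]
          rw [h1, zero_mul]
      rw [Finset.sum_eq_zero this]
      simp only [dilate, Matrix.of_apply]
      rw [dif_pos hi, dif_neg hj]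
  · have : ∀ s : Fin N, dilate A N i s = if i = s then 1 else 0 := by
      intro s
      simp only [dilate, Matrix.of_apply]
      rw [dif_neg hi]
      by_cases hij : i = s
      · rw [if_pos (congrArg Fin.val hij), if_pos hij]
      · rw [if_neg (fun h => hij (Fin.val_inj.mp h)), if_neg hij]
    have hsum : ∑ s : Fin N, dilate A N i s * dilate B N s j = dilate B N i j := by
      rw [Finset.sum_congr rfl fun s _ => by rw [this s]]
      simp [ite_mul]
    rw [hsum]
    simp only [dilate, Matrix.of_apply]
    rw [dif_neg hi, dif_neg hi]

/-- The upper-left `l×l` corner of an `N×N` matrix polynomial. -/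
def MatPoly.top {d l N : ℕ} (hl : l ≤ N) (S : MatPoly d N) : MatPoly d l :=
  Matrix.of fun i j => S (Fin.castLE hl i) (Fin.castLE hl j)

lemma top_mul_dilate {l N : ℕ} (hl : l ≤ N) (S : MatPoly d N) (G : MatPoly d l) :
    MatPoly.top hl (S * dilate G N) = MatPoly.top hl S * G := by
  classical
  apply Matrix.ext
  intro i j
  simp only [MatPoly.top, Matrix.of_apply, Matrix.mul_apply]
  have h0 : ∀ s : Fin N, l ≤ (s : ℕ) →
      S (Fin.castLE hl i) s * dilate G N s (Fin.castLE hl j) = 0 := by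
    intro s hs
    have h1 : dilate G N s (Fin.castLE hl j) = 0 := by
      simp only [dilate, Matrix.of_apply]
      rw [dif_neg (not_lt.mpr hs)]
      have : ((Fin.castLE hl j : Fin N) : ℕ) < l := j.isLt
      rw [if_neg (by omega)]
    rw [h1, mul_zero]
  rw [sum_castLE_eq hl _ h0]
  refine Finset.sum_congr rfl fun t _ => ?_
  congr 1
  have ht : ((Fin.castLE hl t : Fin N) : ℕ) < l := t.isLt
  have hj : ((Fin.castLE hl j : Fin N) : ℕ) < l := j.isLt
  simp only [dilate, Matrix.of_apply]
  rw [dif_pos ht, dif_pos hj]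
  have h2 : (⟨((Fin.castLE hl t : Fin N) : ℕ), ht⟩ : Fin l) = t := Fin.ext rfl
  have h3 : (⟨((Fin.castLE hl j : Fin N) : ℕ), hj⟩ : Fin l) = j := Fin.ext rfl
  rw [h2, h3]

lemma top_one {l N : ℕ} (hl : l ≤ N) : MatPoly.top hl (1 : MatPoly d N) = 1 := by
  ext i j
  simp only [MatPoly.top, Matrix.of_apply, Matrix.one_apply]
  by_cases hij : i = j
  · rw [if_pos hij, if_pos (by rw [hij])]
  · rw [if_neg hij, if_neg (fun h => hij (Fin.castLE_injective hl h))]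

lemma top_sub {l N : ℕ} (hl : l ≤ N) (X Y : MatPoly d N) :
    MatPoly.top hl (X - Y) = MatPoly.top hl X - MatPoly.top hl Y := by
  ext i j
  simp [MatPoly.top, Matrix.sub_apply]

lemma normSq_top_le {l N : ℕ} (hl : l ≤ N) (S : MatPoly d N) :
    MatPoly.normSq (MatPoly.top hl S) ≤ S.normSq := by
  have step1 : MatPoly.normSq (MatPoly.top hl S) ≤
      ∑ i : Fin l, ∑ j' : Fin N, (S (Fin.castLE hl i) j').normSq := by
    refine Finset.sum_le_sum fun i _ => ?_
    exact sum_castLE_le hl _ fun s => FreePoly.normSq_nonneg _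
  refine step1.trans ?_
  exact sum_castLE_le hl (fun i' => ∑ j', (S i' j').normSq)
    (fun i' => Finset.sum_nonneg fun _ _ => FreePoly.normSq_nonneg _)

lemma FreePoly.normSq_zero : (0 : FreePoly d).normSq = 0 := by
  simp [FreePoly.normSq]

lemma normSq_pad_le {k N : ℕ} (hk : k ≤ N) (E : MatPoly d k) :
    MatPoly.normSq (MatPoly.pad E N) ≤ E.normSq := by
  have hzero : ∀ i : Fin N, k ≤ (i : ℕ) →
      (∑ j : Fin N, ((MatPoly.pad E N) i j).normSq) = 0 := by
    intro i hi
    refine Finset.sum_eq_zero fun j _ => ?_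
    have : (MatPoly.pad E N) i j = 0 := by
      simp only [MatPoly.pad, Matrix.of_apply]
      rw [dif_neg (not_lt.mpr hi)]
    rw [this, FreePoly.normSq_zero]
  have heq : MatPoly.normSq (MatPoly.pad E N) = E.normSq := by
    rw [MatPoly.normSq, sum_castLE_eq hk _ hzero]
    refine Finset.sum_congr rfl fun i _ => ?_
    have hzero2 : ∀ j : Fin N, k ≤ (j : ℕ) →
        ((MatPoly.pad E N) (Fin.castLE hk i) j).normSq = 0 := by
      intro j hj
      have : (MatPoly.pad E N) (Fin.castLE hk i) j = 0 := by
        simp only [MatPoly.pad, Matrix.of_apply]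
        rw [dif_pos (show ((Fin.castLE hk i : Fin N) : ℕ) < k from i.isLt),
          dif_neg (not_lt.mpr hj)]
      rw [this, FreePoly.normSq_zero]
    rw [sum_castLE_eq hk _ hzero2]
    refine Finset.sum_congr rfl fun j _ => ?_
    congr 1
    have hi' : ((Fin.castLE hk i : Fin N) : ℕ) < k := i.isLt
    have hj' : ((Fin.castLE hk j : Fin N) : ℕ) < k := j.isLt
    simp only [MatPoly.pad, Matrix.of_apply]
    rw [dif_pos hi', dif_pos hj']
    have h2 : (⟨((Fin.castLE hk i : Fin N) : ℕ), hi'⟩ : Fin k) = i := Fin.ext rfl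
    have h3 : (⟨((Fin.castLE hk j : Fin N) : ℕ), hj'⟩ : Fin k) = j := Fin.ext rfl
    rw [h2, h3]
  exact le_of_eq heq

lemma MatPoly.degLE_dilate {k N : ℕ} {A : MatPoly d k} {n : ℕ} (hA : A.degLE n) :
    (dilate A N).degLE n := by
  intro i j
  simp only [dilate, Matrix.of_apply]
  by_cases hi : (i : ℕ) < k
  · by_cases hj : (j : ℕ) < k
    · rw [dif_pos hi, dif_pos hj]; exact hA _ _
    · rw [dif_pos hi, dif_neg hj]; exact FreePoly.degLE_zero n
  · rw [dif_neg hi]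
    by_cases hij : (i : ℕ) = (j : ℕ)
    · rw [if_pos hij]; exact FreePoly.degLE_one n
    · rw [if_neg hij]; exact FreePoly.degLE_zero n

lemma MatPoly.degLE_top {l N : ℕ} (hl : l ≤ N) {S : MatPoly d N} {n : ℕ}
    (hS : S.degLE n) : (MatPoly.top hl S).degLE n := fun i j => hS _ _

lemma StablyAssociated.symm' {k l : ℕ} {F : MatPoly d k} {G : MatPoly d l}
    (h : StablyAssociated F G) : StablyAssociated G F := by
  obtain ⟨N, hk, hl, P', Q', hP, hQ, heq⟩ := h
  obtain ⟨p, rfl⟩ := hP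
  obtain ⟨q, rfl⟩ := hQ
  refine ⟨N, hl, hk, (p⁻¹).val, (q⁻¹).val, p⁻¹.isUnit, q⁻¹.isUnit, ?_⟩
  rw [← heq]
  calc (p⁻¹).val * (p.val * dilate F N * q.val) * (q⁻¹).val
      = ((p⁻¹).val * (p.val * (dilate F N * q.val))) * (q⁻¹).val := by
        rw [mul_assoc p.val]
    _ = (dilate F N * q.val) * (q⁻¹).val := by rw [Units.inv_mul_cancel_left]
    _ = dilate F N := by rw [Units.mul_inv_cancel_right]

/-- Key one-sided estimate. -/
lemma key_estimate {k l : ℕ} {F : MatPoly d k} {G : MatPoly d l}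
    (h : StablyAssociated F G) (Q : ℕ → MatPoly d l)
    (hQ : ∀ n, (Q n).degLE n ∧ ∀ R : MatPoly d l, R.degLE n →
        MatPoly.normSq (Q n * G - 1) ≤ MatPoly.normSq (R * G - 1)) :
    ∃ (C : ℝ) (D : ℕ), 0 ≤ C ∧ ∀ n (Pn : MatPoly d k), Pn.degLE n →
      MatPoly.normSq (Q (n + D) * G - 1) ≤ C * MatPoly.normSq (Pn * F - 1) := by
  obtain ⟨N, hk, hl, P', Q', hPu, hQu, heq⟩ := h
  obtain ⟨p, rfl⟩ := hPu
  obtain ⟨q, rfl⟩ := hQu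
  obtain ⟨a, ha⟩ := MatPoly.exists_degLE ((q⁻¹).val : MatPoly d N)
  obtain ⟨b, hb⟩ := MatPoly.exists_degLE ((p⁻¹).val : MatPoly d N)
  refine ⟨MatPoly.leftC ((q⁻¹).val : MatPoly d N) * MatPoly.rightC (q.val : MatPoly d N), a + b,
    mul_nonneg (MatPoly.leftC_nonneg _) (MatPoly.rightC_nonneg _), ?_⟩
  intro n Pn hPn
  set E : MatPoly d k := Pn * F - 1 with hE
  set S : MatPoly d N := (q⁻¹).val * dilate Pn N * (p⁻¹).val with hS
  have hprod : S * dilate G N - 1 = (q⁻¹).val * MatPoly.pad E N * q.val := by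
    rw [← heq, hS]
    have step1 : ((q⁻¹).val * dilate Pn N * (p⁻¹).val : MatPoly d N) *
        (p.val * dilate F N * q.val) =
        (q⁻¹).val * (dilate Pn N * dilate F N) * q.val := by
      calc ((q⁻¹).val * dilate Pn N * (p⁻¹).val : MatPoly d N) *
            (p.val * dilate F N * q.val)
          = (q⁻¹).val * dilate Pn N * ((p⁻¹).val * (p.val * (dilate F N * q.val))) := by
            rw [mul_assoc p.val, mul_assoc, mul_assoc]
        _ = (q⁻¹).val * dilate Pn N * (dilate F N * q.val) := by
            rw [Units.inv_mul_cancel_left]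
        _ = (q⁻¹).val * (dilate Pn N * dilate F N) * q.val := by
            rw [mul_assoc, mul_assoc, mul_assoc]
    rw [step1, dilate_mul hk, dilate_eq_pad_add_one hk (Pn * F)]
    have hEE : Pn * F - 1 = E := hE.symm
    rw [hEE]
    calc (q⁻¹).val * (MatPoly.pad E N + 1) * q.val - 1
        = (q⁻¹).val * MatPoly.pad E N * q.val + (q⁻¹).val * q.val - 1 := by
          rw [mul_add, add_mul, mul_one]
      _ = (q⁻¹).val * MatPoly.pad E N * q.val := by
          rw [Units.inv_mul]
          exact add_sub_cancel_right _ _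
  set R : MatPoly d l := MatPoly.top hl S with hR
  have hRG : R * G - 1 = MatPoly.top hl ((q⁻¹).val * MatPoly.pad E N * q.val) := by
    rw [← hprod, hR, ← top_mul_dilate hl, ← top_one hl, ← top_sub hl]
  have hRdeg : R.degLE (n + (a + b)) := by
    have h1 : S.degLE (a + n + b) :=
      MatPoly.degLE_mul (MatPoly.degLE_mul ha (MatPoly.degLE_dilate hPn)) hb
    exact MatPoly.degLE_top hl (MatPoly.degLE_mono h1 (by omega))
  have hmin := (hQ (n + (a + b))).2 R hRdeg
  refine hmin.trans ?_
  rw [hRG]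
  calc MatPoly.normSq (MatPoly.top hl ((q⁻¹).val * MatPoly.pad E N * q.val))
      ≤ MatPoly.normSq ((q⁻¹).val * MatPoly.pad E N * q.val) := normSq_top_le hl _
    _ ≤ MatPoly.rightC (q.val : MatPoly d N) *
        MatPoly.normSq ((q⁻¹).val * MatPoly.pad E N) :=
        MatPoly.normSq_mul_le_right _ _
    _ ≤ MatPoly.rightC (q.val : MatPoly d N) *
        (MatPoly.leftC ((q⁻¹).val : MatPoly d N) * MatPoly.normSq (MatPoly.pad E N)) := by
        refine mul_le_mul_of_nonneg_left ?_ (MatPoly.rightC_nonneg _)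
        exact MatPoly.normSq_mul_le_left _ _
    _ ≤ MatPoly.rightC (q.val : MatPoly d N) *
        (MatPoly.leftC ((q⁻¹).val : MatPoly d N) * E.normSq) := by
        refine mul_le_mul_of_nonneg_left ?_ (MatPoly.rightC_nonneg _)
        exact mul_le_mul_of_nonneg_left (normSq_pad_le hk E) (MatPoly.leftC_nonneg _)
    _ = MatPoly.leftC ((q⁻¹).val : MatPoly d N) * MatPoly.rightC (q.val : MatPoly d N) *
        E.normSq := by ring

end Aux

/-- If `F` and `G` are stably associated, their optimal polynomial approximants achieve
comparable rates of decay. -/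
theorem stablyAssociated_same_rate {d k l : ℕ} (F : MatPoly d k) (G : MatPoly d l)
    (h : StablyAssociated F G)
    (P : ℕ → MatPoly d k) (Q : ℕ → MatPoly d l)
    (hP : ∀ n, (P n).degLE n ∧ ∀ R : MatPoly d k, R.degLE n →
        MatPoly.normSq (P n * F - 1) ≤ MatPoly.normSq (R * F - 1))
    (hQ : ∀ n, (Q n).degLE n ∧ ∀ R : MatPoly d l, R.degLE n →
        MatPoly.normSq (Q n * G - 1) ≤ MatPoly.normSq (R * G - 1)) :
    ∃ (C₁ C₂ : ℝ) (D₁ D₂ N₀ : ℕ), ∀ n : ℕ, N₀ ≤ n →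
      C₁ * MatPoly.normSq (P (n + D₁) * F - 1) ≤ MatPoly.normSq (Q n * G - 1) ∧
      MatPoly.normSq (Q n * G - 1) ≤ C₂ * MatPoly.normSq (P (n - D₂) * F - 1) := by
  obtain ⟨C₂, D₂, hC₂0, hkey₂⟩ := key_estimate h Q hQ
  obtain ⟨C₁', D₁, hC₁0, hkey₁⟩ := key_estimate h.symm' P hP
  refine ⟨1 / (C₁' + 1), C₂, D₁, D₂, D₂, fun n hn => ⟨?_, ?_⟩⟩
  · have h1 := hkey₁ n (Q n) (hQ n).1
    have hq0 : 0 ≤ MatPoly.normSq (Q n * G - 1) := MatPoly.normSq_nonneg _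
    rw [div_mul_eq_mul_div, div_le_iff₀ (by linarith)]
    nlinarith
  · have hle : n - D₂ + D₂ = n := Nat.sub_add_cancel hn
    have h2 := hkey₂ (n - D₂) (P (n - D₂)) (hP (n - D₂)).1
    rwa [hle] at h2
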